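/- Let G be a finite abelian group, V a finite-dimensional complex vector space of dimension d, ρ : G → GL(V) a representation, and B a nondegenerate symmetric bilinear form on V satisfying B(ρ(g)x, ρ(g)y) = B(x, y) for all g ∈ G and x, y ∈ V. Then the complex vector space of G-invariant symmetric bilinear forms on V, i.e. symmetric bilinear Q : V × V → ℂ with Q(ρ(g)x, ρ(g)y) = Q(x, y) for all g, x, y, has dimension at least d/2 (that is, twice its dimension is at least d). -/

import Mathlib

set_option maxHeartbeats 1000000

open Module Submodule

/-- The subspace of `G`-invariant symmetric bilinear forms on `V`. -/
noncomputable def invariantSymmBilinForms (G : Type*) [Group G] (V : Type*) [AddCommGroup V]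
    [Module ℂ V] (ρ : G →* (V →ₗ[ℂ] V)) :
    Submodule ℂ (V →ₗ[ℂ] V →ₗ[ℂ] ℂ) where
  carrier := {Q | (∀ x y, Q x y = Q y x) ∧ ∀ (g : G) (x y : V), Q (ρ g x) (ρ g y) = Q x y}
  add_mem' := by
    intro Q R hQ hR
    exact ⟨fun x y => by simp [hQ.1 x y, hR.1 x y],
      fun g x y => by simp [hQ.2 g x y, hR.2 g x y]⟩
  zero_mem' := ⟨fun x y => by simp, fun g x y => by simp⟩
  smul_mem' := by
    intro cc Q hQ
    exact ⟨fun x y => by simp [hQ.1 x y], fun g x y => by simp [hQ.2 g x y]⟩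

lemma mem_invariantSymmBilinForms {G : Type*} [Group G] {V : Type*} [AddCommGroup V]
    [Module ℂ V] (ρ : G →* (V →ₗ[ℂ] V)) (Q : V →ₗ[ℂ] V →ₗ[ℂ] ℂ) :
    Q ∈ invariantSymmBilinForms G V ρ ↔
      (∀ x y, Q x y = Q y x) ∧ ∀ (g : G) (x y : V), Q (ρ g x) (ρ g y) = Q x y :=
  Iff.rfl

/-- Every nonzero invariant subspace for a commuting family contains a common eigenvector. -/
lemma exists_common_eigenvector {G : Type*} [CommGroup G] {V : Type*} [AddCommGroup V]
    [Module ℂ V] [FiniteDimensional ℂ V] (ρ : G →* (V →ₗ[ℂ] V)) :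
    ∀ (n : ℕ) (p : Submodule ℂ V), Module.finrank ℂ p = n → p ≠ ⊥ →
      (∀ g, ∀ x ∈ p, ρ g x ∈ p) →
      ∃ (χ : G → ℂ) (v : V), v ∈ p ∧ v ≠ 0 ∧ ∀ g, ρ g v = χ g • v := by
  intro n
  induction n using Nat.strong_induction_on with
  | _ n IH =>
    intro p hpn hp hmap
    by_cases hscal : ∀ g : G, ∃ c : ℂ, ∀ x ∈ p, ρ g x = c • x
    · choose χ hχ using hscal
      obtain ⟨v, hvp, hv0⟩ := p.ne_bot_iff.1 hp
      exact ⟨χ, v, hvp, hv0, fun g => hχ g v hvp⟩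
    · push_neg at hscal
      obtain ⟨g₀, hg₀⟩ := hscal
      haveI : Nontrivial p := Submodule.nontrivial_iff_ne_bot.2 hp
      obtain ⟨μ, hμ⟩ := Module.End.exists_eigenvalue ((ρ g₀).restrict (hmap g₀))
      obtain ⟨x, hx⟩ := hμ.exists_hasEigenvector
      have hxeq : ρ g₀ (x : V) = μ • (x : V) := by
        have h2 := congrArg (Subtype.val) hx.apply_eq_smul
        rwa [LinearMap.restrict_coe_apply] at h2
      set q : Submodule ℂ V := p ⊓ LinearMap.ker (ρ g₀ - μ • (LinearMap.id : V →ₗ[ℂ] V))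
        with hqdef
      have hmemq : ∀ y, y ∈ q ↔ y ∈ p ∧ ρ g₀ y = μ • y := by
        intro y
        simp [hqdef, Submodule.mem_inf, LinearMap.mem_ker, LinearMap.sub_apply, sub_eq_zero]
      have hq_ne : q ≠ ⊥ := by
        intro h
        have hxq : (x : V) ∈ q := (hmemq _).2 ⟨x.2, hxeq⟩
        rw [h, Submodule.mem_bot] at hxq
        exact hx.right (Subtype.ext hxq)
      have hqmap : ∀ g, ∀ y ∈ q, ρ g y ∈ q := by
        intro g y hy
        obtain ⟨hyp, hye⟩ := (hmemq y).1 hy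
        refine (hmemq _).2 ⟨hmap g y hyp, ?_⟩
        have hcomm : ρ g₀ (ρ g y) = ρ g (ρ g₀ y) := by
          have h : ρ g₀ * ρ g = ρ g * ρ g₀ := by
            rw [← map_mul, ← map_mul, mul_comm]
          calc ρ g₀ (ρ g y) = (ρ g₀ * ρ g) y := rfl
            _ = (ρ g * ρ g₀) y := by rw [h]
            _ = ρ g (ρ g₀ y) := rfl
        rw [hcomm, hye, map_smul]
      have hqlt : q < p := by
        refine lt_of_le_of_ne inf_le_left ?_
        intro h
        obtain ⟨y, hyp, hy⟩ := hg₀ μ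
        rw [← h] at hyp
        exact hy ((hmemq y).1 hyp).2
      obtain ⟨χ, v, hvq, hv0, hveig⟩ :=
        IH (finrank ℂ q) (hpn ▸ Submodule.finrank_lt_finrank_of_lt hqlt) q rfl hq_ne hqmap
      exact ⟨χ, v, le_of_lt hqlt hvq, hv0, hveig⟩

universe u

lemma aux_lemma (G : Type*) [CommGroup G] [Finite G] (n : ℕ) :
    ∀ (V : Type u) [AddCommGroup V] [Module ℂ V] [FiniteDimensional ℂ V]
      (ρ : G →* (V →ₗ[ℂ] V)) (B : V →ₗ[ℂ] V →ₗ[ℂ] ℂ),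
      (∀ x y, B x y = B y x) → (∀ x, (∀ y, B x y = 0) → x = 0) →
      (∀ (g : G) (x y : V), B (ρ g x) (ρ g y) = B x y) →
      Module.finrank ℂ V = n →
      n ≤ 2 * Module.finrank ℂ ↥(invariantSymmBilinForms G V ρ) := by
  induction n using Nat.strong_induction_on with
  | _ n IH =>
  intro V _ _ _ ρ B hsym hnd hinv hrank
  rcases Nat.eq_zero_or_pos n with hn0 | hn0
  · exact hn0 ▸ Nat.zero_le _
  haveI hVnt : Nontrivial V := Module.finrank_pos_iff.mp (hrank ▸ hn0)
  have htop : (⊤ : Submodule ℂ V) ≠ ⊥ := by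
    obtain ⟨v, hv⟩ := exists_ne (0 : V)
    intro h
    exact hv ((Submodule.eq_bot_iff _).1 h v trivial)
  obtain ⟨χ, v, -, hv0, hveig⟩ :=
    exists_common_eigenvector ρ (finrank ℂ (⊤ : Submodule ℂ V)) ⊤ rfl htop
      (fun g x _ => trivial)
  have hρinv : ∀ (g : G) (x : V), ρ g (ρ g⁻¹ x) = x := by
    intro g x
    have h : ρ g * ρ g⁻¹ = 1 := by rw [← map_mul, mul_inv_cancel, map_one]
    calc ρ g (ρ g⁻¹ x) = (ρ g * ρ g⁻¹) x := rfl
      _ = x := by rw [h]; rfl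
  have hχinv : ∀ g : G, χ g⁻¹ * χ g = 1 := by
    intro g
    have h1 : (χ g⁻¹ * χ g) • v = (1 : ℂ) • v := by
      rw [one_smul, mul_smul, ← hveig g, ← map_smul, ← hveig g⁻¹, hρinv]
    exact smul_left_injective ℂ hv0 h1
  have hχinv' : ∀ g : G, χ g * χ g⁻¹ = 1 := fun g => by rw [mul_comm]; exact hχinv g
  have hχmul : ∀ a b : G, χ (a * b) = χ a * χ b := by
    intro a b
    have h1 : χ (a * b) • v = (χ a * χ b) • v := by
      rw [← hveig (a * b), map_mul, Module.End.mul_apply, hveig b, map_smul, hveig a,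
        smul_smul, mul_comm]
    exact smul_left_injective ℂ hv0 h1
  -- Construct the small invariant subspace U
  obtain ⟨U, hvU, hUinv, hUnd, hex, hU2⟩ :
      ∃ U : Submodule ℂ V, v ∈ U ∧ (∀ g, ∀ u ∈ U, ρ g u ∈ U) ∧
        (∀ u ∈ U, (∀ w ∈ U, B u w = 0) → u = 0) ∧
        (∃ u₁ ∈ U, ∃ u₂ ∈ U, B u₁ u₂ ≠ 0) ∧ finrank ℂ U ≤ 2 := by
    by_cases hvv : B v v = 0
    · -- isotropic case: take a hyperbolic-ish pair
      have hnex : ¬ ∀ w, B v w = 0 := fun h => hv0 (hnd v h)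
      push_neg at hnex
      obtain ⟨w, hw⟩ := hnex
      haveI := Fintype.ofFinite G
      set w' : V := ∑ g : G, χ g • ρ g w with hw'def
      have hterm : ∀ g : G, B v (χ g • ρ g w) = B v w := by
        intro g
        have h3 : ρ g⁻¹ (ρ g w) = w := by
          have h := hρinv g⁻¹ w; rwa [inv_inv] at h
        have h2 := hinv g⁻¹ v (ρ g w)
        rw [h3, hveig g⁻¹] at h2
        rw [map_smul, smul_eq_mul, ← h2, map_smul, LinearMap.smul_apply, smul_eq_mul,
          ← mul_assoc, hχinv', one_mul]
      have hBvw' : B v w' = (Fintype.card G : ℂ) * B v w := by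
        rw [hw'def, map_sum]
        rw [Finset.sum_congr rfl (fun g _ => hterm g)]
        simp [Finset.sum_const, nsmul_eq_mul]
      have hBvw'0 : B v w' ≠ 0 := by
        rw [hBvw']
        exact mul_ne_zero (Nat.cast_ne_zero.2 Fintype.card_ne_zero) hw
      have hw'eig : ∀ h : G, ρ h w' = χ h⁻¹ • w' := by
        intro h
        rw [hw'def, map_sum, Finset.smul_sum]
        rw [← Equiv.sum_comp (Equiv.mulLeft h) (fun g => χ h⁻¹ • χ g • ρ g w)]
        refine Finset.sum_congr rfl (fun g _ => ?_)
        have hL : ρ h (χ g • ρ g w) = χ g • ρ (h * g) w := by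
          rw [map_smul, map_mul, Module.End.mul_apply]
        rw [hL]
        show χ g • ρ (h * g) w = χ h⁻¹ • χ (h * g) • ρ (h * g) w
        rw [hχmul, smul_smul, ← mul_assoc, hχinv, one_mul]
      have hw'0 : w' ≠ 0 := by
        intro h
        rw [h, map_zero] at hBvw'0
        exact hBvw'0 rfl
      refine ⟨Submodule.span ℂ {v, w'}, Submodule.subset_span (by simp), ?_, ?_,
        ⟨v, Submodule.subset_span (by simp), w', Submodule.subset_span (by simp), hBvw'0⟩, ?_⟩
      · intro g u hu
        have hle : Submodule.map (ρ g) (Submodule.span ℂ {v, w'}) ≤ Submodule.span ℂ {v, w'} := by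
          rw [Submodule.map_span, Set.image_pair]
          refine Submodule.span_le.2 ?_
          rintro x (rfl | rfl)
          · rw [hveig]
            exact Submodule.smul_mem _ _ (Submodule.subset_span (by simp))
          · rw [hw'eig]
            exact Submodule.smul_mem _ _ (Submodule.subset_span (by simp))
        exact hle (Submodule.mem_map_of_mem hu)
      · intro u hu hB0
        rw [Submodule.mem_span_pair] at hu
        obtain ⟨a, b, rfl⟩ := hu
        have h1 := hB0 v (Submodule.subset_span (by simp))
        have h2 := hB0 w' (Submodule.subset_span (by simp))
        simp only [map_add, map_smul, LinearMap.add_apply, LinearMap.smul_apply,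
          smul_eq_mul] at h1 h2
        rw [hvv, mul_zero, zero_add, hsym w' v] at h1
        have hb : b = 0 := by
          rcases mul_eq_zero.1 h1 with h | h
          · exact h
          · exact absurd h hBvw'0
        subst hb
        rw [zero_mul, add_zero] at h2
        have ha : a = 0 := by
          rcases mul_eq_zero.1 h2 with h | h
          · exact h
          · exact absurd h hBvw'0
        rw [ha, zero_smul, zero_smul, add_zero]
      · have h1 := Submodule.finrank_sup_add_finrank_inf_eq (ℂ ∙ v) (ℂ ∙ w')
        have h2 : finrank ℂ (ℂ ∙ v) = 1 := finrank_span_singleton hv0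
        have h3 : finrank ℂ (ℂ ∙ w') = 1 := finrank_span_singleton hw'0
        rw [show ({v, w'} : Set V) = insert v {w'} from rfl, Submodule.span_insert]
        omega
    · -- anisotropic case: take the line through v
      refine ⟨Submodule.span ℂ {v}, Submodule.mem_span_singleton_self v, ?_, ?_,
        ⟨v, Submodule.mem_span_singleton_self v, v, Submodule.mem_span_singleton_self v, hvv⟩,
        ?_⟩
      · intro g u hu
        rw [Submodule.mem_span_singleton] at hu ⊢
        obtain ⟨a, rfl⟩ := hu
        exact ⟨a * χ g, by rw [map_smul, hveig g, smul_smul, mul_comm]⟩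
      · intro u hu hB0
        rw [Submodule.mem_span_singleton] at hu
        obtain ⟨a, rfl⟩ := hu
        have h1 := hB0 v (Submodule.mem_span_singleton_self v)
        simp only [map_smul, LinearMap.smul_apply, smul_eq_mul] at h1
        rcases mul_eq_zero.1 h1 with h | h
        · rw [h, zero_smul]
        · exact absurd h hvv
      · rw [show ({v} : Set V) = {v} from rfl]
        have h2 : finrank ℂ (ℂ ∙ v) = 1 := finrank_span_singleton hv0
        omega
  -- the orthogonal complement
  have hUbot : U ≠ ⊥ := fun h => hv0 ((Submodule.eq_bot_iff U).1 h v hvU)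
  have hrefl : LinearMap.IsRefl B := fun x y h => (hsym y x).trans h
  have hUndR : (LinearMap.BilinForm.restrict B U).Nondegenerate := by
    refine ⟨fun u hu => ?_, fun u hu => ?_⟩
    · refine Subtype.ext (hUnd u u.2 (fun w hwU => ?_))
      simpa using hu ⟨w, hwU⟩
    · refine Subtype.ext (hUnd u u.2 (fun w hwU => ?_))
      rw [hsym]
      simpa using hu ⟨w, hwU⟩
  set U' : Submodule ℂ V := LinearMap.BilinForm.orthogonal B U with hU'def
  have hc : IsCompl U U' :=
    LinearMap.BilinForm.isCompl_orthogonal_of_restrict_nondegenerate hrefl hUndR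
  have hU'mem : ∀ x : V, x ∈ U' ↔ ∀ u ∈ U, B u x = 0 := by
    intro x
    rw [hU'def, LinearMap.BilinForm.mem_orthogonal_iff]
  have hU'inv : ∀ (g : G), ∀ x ∈ U', ρ g x ∈ U' := by
    intro g x hx
    rw [hU'mem] at hx ⊢
    intro u hu
    have h1 : B (ρ g (ρ g⁻¹ u)) (ρ g x) = B (ρ g⁻¹ u) x := hinv g _ _
    rw [hρinv] at h1
    rw [h1]
    exact hx _ (hUinv g⁻¹ u hu)
  let ρ' : G →* (↥U' →ₗ[ℂ] ↥U') :=
    { toFun := fun g => (ρ g).restrict (hU'inv g)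
      map_one' := by
        ext x
        rw [LinearMap.restrict_coe_apply]
        simp
      map_mul' := by
        intro g h
        ext x
        rw [Module.End.mul_apply, LinearMap.restrict_coe_apply, LinearMap.restrict_coe_apply,
          LinearMap.restrict_coe_apply, map_mul, Module.End.mul_apply] }
  have hρ'coe : ∀ (g : G) (x : ↥U'), ((ρ' g x : ↥U') : V) = ρ g (x : V) := by
    intro g x
    exact LinearMap.restrict_coe_apply (ρ g) (hU'inv g) x
  set B' : ↥U' →ₗ[ℂ] ↥U' →ₗ[ℂ] ℂ := LinearMap.domRestrict₁₂ B U' U' with hB'def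
  have hB'app : ∀ x y : ↥U', B' x y = B (x : V) (y : V) := fun x y => rfl
  have hB'sym : ∀ x y : ↥U', B' x y = B' y x := fun x y => hsym _ _
  have hB'nd : ∀ x : ↥U', (∀ y : ↥U', B' x y = 0) → x = 0 := by
    intro x hx
    have hall : ∀ y : V, B (x : V) y = 0 := by
      intro y
      have hy : y ∈ U ⊔ U' := by rw [hc.sup_eq_top]; trivial
      obtain ⟨a, ha, b, hb, rfl⟩ := Submodule.mem_sup.1 hy
      rw [map_add]
      have h1 : B (x : V) a = 0 := by
        rw [hsym]
        exact ((hU'mem (x : V)).1 x.2) a ha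
      have h2 : B (x : V) b = 0 := hx ⟨b, hb⟩
      rw [h1, h2, add_zero]
    exact Subtype.ext (hnd _ hall)
  have hB'inv : ∀ (g : G) (x y : ↥U'), B' (ρ' g x) (ρ' g y) = B' x y := by
    intro g x y
    rw [hB'app, hB'app, hρ'coe, hρ'coe]
    exact hinv g _ _
  -- dimension bookkeeping for the recursion
  have hsum : finrank ℂ U + finrank ℂ U' = n := by
    rw [← hrank]
    exact Submodule.finrank_add_eq_of_isCompl hc
  have hU1 : 1 ≤ finrank ℂ U := by
    haveI : Nontrivial ↥U := Submodule.nontrivial_iff_ne_bot.2 hUbot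
    exact Module.finrank_pos
  have hIH := IH (finrank ℂ ↥U') (by omega) ↥U' ρ' B' hB'sym hB'nd hB'inv rfl
  -- projections
  set πU := U.projectionOnto U' hc with hπUdef
  set πU' := U'.projectionOnto U hc.symm with hπU'def
  have hdecomp : ∀ x : V, (↑(πU x) : V) + ↑(πU' x) = x := fun x =>
    Submodule.projection_add_projection_eq_self hc x
  have heqU' : ∀ (g : G) (x : V), (↑(πU' (ρ g x)) : V) = ρ g ↑(πU' x) := by
    intro g x
    have h1 : ρ g x = ρ g ↑(πU x) + ρ g ↑(πU' x) := by rw [← map_add, hdecomp]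
    have h2 : πU' (ρ g x) = πU' (ρ g ↑(πU x)) + πU' (ρ g ↑(πU' x)) := by
      rw [← map_add, ← h1]
    rw [Submodule.projectionOnto_apply_of_mem_right hc.symm (hUinv g _ (πU x).2)] at h2
    have h3 : πU' (ρ g ↑(πU' x)) = ⟨ρ g ↑(πU' x), hU'inv g _ (πU' x).2⟩ :=
      Submodule.projectionOnto_apply_left hc.symm ⟨ρ g ↑(πU' x), hU'inv g _ (πU' x).2⟩
    rw [h3, zero_add] at h2
    rw [h2]
  have heqU : ∀ (g : G) (x : V), (↑(πU (ρ g x)) : V) = ρ g ↑(πU x) := by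
    intro g x
    have h2 : ρ g x = ρ g ↑(πU x) + ρ g ↑(πU' x) := by rw [← map_add, hdecomp]
    have h4 : (↑(πU (ρ g x)) : V) = ρ g x - ↑(πU' (ρ g x)) :=
      eq_sub_of_add_eq (hdecomp (ρ g x))
    rw [h4, heqU' g x, h2, add_sub_cancel_right]
  have hπρ' : ∀ (g : G) (x : V), πU' (ρ g x) = ρ' g (πU' x) := by
    intro g x
    refine Subtype.ext ?_
    rw [heqU', hρ'coe]
  -- the embedding of forms
  set W' := invariantSymmBilinForms G (↥U') ρ' with hW'def
  let F : ↥W' × ℂ → (V →ₗ[ℂ] V →ₗ[ℂ] ℂ) := fun Pc =>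
    LinearMap.mk₂ ℂ (fun x y => Pc.1.1 (πU' x) (πU' y) + Pc.2 * B ↑(πU x) ↑(πU y))
      (by intro m₁ m₂ y; simp [mul_add]; ring)
      (by intro c m y; simp [map_smul]; ring)
      (by intro m y₁ y₂; simp [mul_add]; ring)
      (by intro c m y; simp [map_smul]; ring)
  have hFapp : ∀ (Pc : ↥W' × ℂ) (x y : V),
      F Pc x y = Pc.1.1 (πU' x) (πU' y) + Pc.2 * B ↑(πU x) ↑(πU y) := fun Pc x y => rfl
  have hFmem : ∀ Pc, F Pc ∈ invariantSymmBilinForms G V ρ := by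
    intro Pc
    obtain ⟨Psym, Pinv⟩ := (mem_invariantSymmBilinForms ρ' Pc.1.1).1 Pc.1.2
    rw [mem_invariantSymmBilinForms]
    constructor
    · intro x y
      rw [hFapp, hFapp, Psym (πU' x) (πU' y), hsym (↑(πU x)) (↑(πU y))]
    · intro g x y
      rw [hFapp, hFapp, hπρ', hπρ', Pinv g, heqU g x, heqU g y, hinv g]
  let Ψ : ↥W' × ℂ →ₗ[ℂ] ↥(invariantSymmBilinForms G V ρ) :=
    { toFun := fun Pc => ⟨F Pc, hFmem Pc⟩
      map_add' := by
        intro Pc Qd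
        refine Subtype.ext ?_
        refine LinearMap.ext fun x => LinearMap.ext fun y => ?_
        show F (Pc + Qd) x y = F Pc x y + F Qd x y
        rw [hFapp, hFapp, hFapp]
        show ((Pc.1 : ↥U' →ₗ[ℂ] ↥U' →ₗ[ℂ] ℂ) + Qd.1.1) (πU' x) (πU' y)
            + (Pc.2 + Qd.2) * B ↑(πU x) ↑(πU y) = _
        simp only [LinearMap.add_apply]
        ring
      map_smul' := by
        intro c Pc
        refine Subtype.ext ?_
        refine LinearMap.ext fun x => LinearMap.ext fun y => ?_
        show F (c • Pc) x y = c * F Pc x y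
        rw [hFapp, hFapp]
        show (c • (Pc.1 : ↥U' →ₗ[ℂ] ↥U' →ₗ[ℂ] ℂ)) (πU' x) (πU' y)
            + (c * Pc.2) * B ↑(πU x) ↑(πU y) = _
        simp only [LinearMap.smul_apply, smul_eq_mul]
        ring }
  have hinj : Function.Injective Ψ := by
    rw [injective_iff_map_eq_zero]
    intro Pc hPc
    have hF0 : ∀ x y : V, F Pc x y = 0 := by
      intro x y
      have := congrArg Subtype.val hPc
      have h2 : F Pc = 0 := this
      rw [h2]
      rfl
    obtain ⟨u₁, hu₁, u₂, hu₂, hB12⟩ := hex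
    have hπU'u : ∀ u ∈ U, πU' u = 0 := fun u hu =>
      Submodule.projectionOnto_apply_of_mem_right hc.symm hu
    have hπUu : ∀ (u : V) (hu : u ∈ U), πU u = ⟨u, hu⟩ := fun u hu =>
      Submodule.projectionOnto_apply_left hc ⟨u, hu⟩
    have hc0 : Pc.2 = 0 := by
      have h1 := hF0 u₁ u₂
      rw [hFapp, hπU'u u₁ hu₁, hπUu u₁ hu₁, hπUu u₂ hu₂] at h1
      simp only [map_zero, LinearMap.zero_apply, zero_add] at h1
      rcases mul_eq_zero.1 h1 with h | h
      · exact h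
      · exact absurd h hB12
    have hP0 : Pc.1 = 0 := by
      refine Subtype.ext ?_
      refine LinearMap.ext fun x => LinearMap.ext fun y => ?_
      have h1 := hF0 (x : V) (y : V)
      have hx' : πU' (x : V) = x := Submodule.projectionOnto_apply_left hc.symm x
      have hy' : πU' (y : V) = y := Submodule.projectionOnto_apply_left hc.symm y
      rw [hFapp, hx', hy', hc0, zero_mul, add_zero] at h1
      exact h1
    have : Pc = (Pc.1, Pc.2) := rfl
    rw [this, hP0, hc0]
    rfl
  have hfin : finrank ℂ ↥W' + 1 ≤ finrank ℂ ↥(invariantSymmBilinForms G V ρ) := by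
    haveI : Module.Free ℂ ↥W' := Module.Free.of_divisionRing ℂ ↥W'
    have h := LinearMap.finrank_le_finrank_of_injective hinj
    rwa [Module.finrank_prod, Module.finrank_self] at h
  omega

/-- Let `G` be a finite abelian group, `V` a `d`-dimensional complex vector space,
`ρ : G → GL(V)` a representation, and `B` a nondegenerate symmetric `G`-invariant
bilinear form on `V`.  Then the space of `G`-invariant symmetric bilinear forms on `V`
has dimension at least `d/2` (i.e. twice its dimension is at least `d`). -/
theorem invariant_symmetric_forms_dim_lower_bound
    (G : Type*) [CommGroup G] [Finite G]
    (V : Type*) [AddCommGroup V] [Module ℂ V] [FiniteDimensional ℂ V]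
    (d : ℕ) (hd : d = Module.finrank ℂ V)
    (ρ : G →* (V →ₗ[ℂ] V))
    (B : V →ₗ[ℂ] V →ₗ[ℂ] ℂ)
    (hBsymm : ∀ x y, B x y = B y x)
    (hBnd : ∀ x, (∀ y, B x y = 0) → x = 0)
    (hBinv : ∀ (g : G) (x y : V), B (ρ g x) (ρ g y) = B x y) :
    d ≤ 2 * Module.finrank ℂ ↥(invariantSymmBilinForms G V ρ) := by
  rw [hd]
  exact aux_lemma G (Module.finrank ℂ V) V ρ B hBsymm hBnd hBinv rfl
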